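/- Let a, b, q, s ∈ ℂ with s ∉ {0, 1, -1}. Suppose y : ℂ → ℂ is analytic on an open neighborhood V of 0 and satisfies Heun's differential equation with parameters (4s/(1+s)², q; a, a+1/2; b; 1/2) at every z ∈ V with z ∉ {0, 1, 4s/(1+s)²}. Then there is an open neighborhood U of 0 such that the function g(x) = (1 + x/s)^(-2a) · y(4xs/(x+s)²) satisfies Heun's differential equation with parameters (s², (1+s)²q - 2abs; 2a, 2a-b+1; b; 2a-b+1) at every x ∈ U with x ∉ {0, 1, s², -s}. -/

import Mathlib

open Complex

set_option maxHeartbeats 2000000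

private lemma aux_CY (x s a b q : ℂ)
    (hx0 : x ≠ 0) (hx1 : x - 1 ≠ 0) (hxs2 : x - s^2 ≠ 0) (hxs : x + s ≠ 0)
    (hs0 : s ≠ 0) (h1s : (1:ℂ) + s ≠ 0) (hxms : x - s ≠ 0) :
    -(2*a) * ((-(2*a) - 1) * ((s/(x+s))*(s/(x+s))) * (1/s)) * (1/s)
      + -((a*(a+1/2)*(4*x*s) - q*(x+s)^2)/(x+s)^2 * ((x+s)^2*((x+s)^2*((x+s)^2*(1+s)^2)))
            / (16*x*s^2*(x-s)^2*(x-1)*(x-s^2)))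
          * (4*s*(s-x)/(x+s)^3) * (4*s*(s-x)/(x+s)^3)
      + b/x * (-(2*a) * (s/(x+s)) * (1/s))
      + (2*a - b + 1)/(x-1) * (-(2*a) * (s/(x+s)) * (1/s))
      + (2*a - b + 1)/(x-s^2) * (-(2*a) * (s/(x+s)) * (1/s))
      + ((2*a)*(2*a-b+1)*x - ((1+s)^2*q - 2*a*b*s))/(x*(x-1)*(x-s^2)) = 0 := by
  have hLCD : x*(x-1)*(x-s^2)*(x+s)^2 ≠ 0 :=
    mul_ne_zero (mul_ne_zero (mul_ne_zero hx0 hx1) hxs2) (pow_ne_zero 2 hxs)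
  simp only [div_mul_div_comm, div_mul_eq_mul_div, mul_div_assoc', div_div_eq_mul_div,
    div_div, neg_mul, mul_neg, neg_div]
  rw [show (2 * a * ((-(2 * a) - 1) * (s * s) * 1) * 1) / ((x + s) * (x + s) * s * s)
      = (2*a*(-(2*a)-1)*x*(x-1)*(x-s^2)) / (x*(x-1)*(x-s^2)*(x+s)^2) from by
    rw [div_eq_div_iff (mul_ne_zero (mul_ne_zero (mul_ne_zero hxs hxs) hs0) hs0) hLCD]; ring]
  rw [show ((a * (a + 1 / 2) * (4 * x * s) - q * (x + s) ^ 2) *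
            ((x + s) ^ 2 * ((x + s) ^ 2 * ((x + s) ^ 2 * (1 + s) ^ 2))) * (4 * s * (s - x)) *
            (4 * s * (s - x)))
          / ((x + s) ^ 2 * (16 * x * s ^ 2 * (x - s) ^ 2 * (x - 1) * (x - s ^ 2)) * (x + s) ^ 3 * (x + s) ^ 3)
      = ((a*(a+1/2)*(4*x*s) - q*(x+s)^2)*(1+s)^2) / (x*(x-1)*(x-s^2)*(x+s)^2) from by
    rw [div_eq_div_iff (mul_ne_zero (mul_ne_zero (mul_ne_zero (pow_ne_zero 2 hxs)
      (mul_ne_zero (mul_ne_zero (mul_ne_zero (mul_ne_zero (mul_ne_zero (by norm_num : (16:ℂ) ≠ 0) hx0)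
        (pow_ne_zero 2 hs0)) (pow_ne_zero 2 hxms)) hx1) hxs2)) (pow_ne_zero 3 hxs)) (pow_ne_zero 3 hxs)) hLCD]
    ring]
  rw [show (b * (2 * a * s * 1)) / (x * ((x + s) * s))
      = (2*a*b*(x-1)*(x-s^2)*(x+s)) / (x*(x-1)*(x-s^2)*(x+s)^2) from by
    rw [div_eq_div_iff (mul_ne_zero hx0 (mul_ne_zero hxs hs0)) hLCD]; ring]
  rw [show ((2 * a - b + 1) * (2 * a * s * 1)) / ((x - 1) * ((x + s) * s))
      = (2*a*(2*a-b+1)*x*(x-s^2)*(x+s)) / (x*(x-1)*(x-s^2)*(x+s)^2) from by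
    rw [div_eq_div_iff (mul_ne_zero hx1 (mul_ne_zero hxs hs0)) hLCD]; ring]
  rw [show ((2 * a - b + 1) * (2 * a * s * 1)) / ((x - s ^ 2) * ((x + s) * s))
      = (2*a*(2*a-b+1)*x*(x-1)*(x+s)) / (x*(x-1)*(x-s^2)*(x+s)^2) from by
    rw [div_eq_div_iff (mul_ne_zero hxs2 (mul_ne_zero hxs hs0)) hLCD]; ring]
  rw [show (2 * a * (2 * a - b + 1) * x - ((1 + s) ^ 2 * q - 2 * a * b * s)) / (x * (x - 1) * (x - s ^ 2))
      = ((2*a*(2*a-b+1)*x - ((1+s)^2*q - 2*a*b*s))*(x+s)^2) / (x*(x-1)*(x-s^2)*(x+s)^2) from by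
    rw [div_eq_div_iff (mul_ne_zero (mul_ne_zero hx0 hx1) hxs2) hLCD]; ring]
  simp only [← neg_div]
  rw [← add_div, ← add_div, ← add_div, ← add_div, ← add_div,
    div_eq_zero_iff]
  exact Or.inl (by ring)

private lemma aux_CY1 (x s a b : ℂ)
    (hx0 : x ≠ 0) (hx1 : x - 1 ≠ 0) (hxs2 : x - s^2 ≠ 0) (hxs : x + s ≠ 0)
    (hs0 : s ≠ 0) (h1s : (1:ℂ) + s ≠ 0) (hxms : x - s ≠ 0) :
    -(2*a) * (s/(x+s)) * (1/s) * (4*s*(s-x)/(x+s)^3)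
      + -(2*a) * (s/(x+s)) * (1/s) * (4*s*(s-x)/(x+s)^3)
      + -(b*(x+s)^2/(4*x*s)) * (4*s*(s-x)/(x+s)^3) * (4*s*(s-x)/(x+s)^3)
      + (1/2*(x+s)^2/(x-s)^2) * (4*s*(s-x)/(x+s)^3) * (4*s*(s-x)/(x+s)^3)
      + ((a+(a+1/2)-b-1/2+1) * ((x+s)^2*(1+s)^2)/(4*s*(x-1)*(x-s^2)))
          * (4*s*(s-x)/(x+s)^3) * (4*s*(s-x)/(x+s)^3)
      + 8*s*(x-2*s)/(x+s)^4
      + b/x * (4*s*(s-x)/(x+s)^3)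
      + (2*a-b+1)/(x-1) * (4*s*(s-x)/(x+s)^3)
      + (2*a-b+1)/(x-s^2) * (4*s*(s-x)/(x+s)^3) = 0 := by
  have hLCD : x*(x-1)*(x-s^2)*(x+s)^4 ≠ 0 :=
    mul_ne_zero (mul_ne_zero (mul_ne_zero hx0 hx1) hxs2) (pow_ne_zero 4 hxs)
  simp only [div_mul_div_comm, div_mul_eq_mul_div, mul_div_assoc', div_div_eq_mul_div,
    div_div, neg_mul, mul_neg, neg_div]
  rw [show (2 * a * s * 1 * (4 * s * (s - x))) / ((x + s) * s * (x + s) ^ 3)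
      = (8*a*s*(s-x)*x*(x-1)*(x-s^2)) / (x*(x-1)*(x-s^2)*(x+s)^4) from by
    rw [div_eq_div_iff (mul_ne_zero (mul_ne_zero hxs hs0) (pow_ne_zero 3 hxs)) hLCD]; ring]
  rw [show (b * (x + s) ^ 2 * (4 * s * (s - x)) * (4 * s * (s - x))) / (4 * x * s * (x + s) ^ 3 * (x + s) ^ 3)
      = (4*b*s*(s-x)^2*(x-1)*(x-s^2)) / (x*(x-1)*(x-s^2)*(x+s)^4) from by
    rw [div_eq_div_iff (mul_ne_zero (mul_ne_zero (mul_ne_zero (mul_ne_zero (by norm_num : (4:ℂ) ≠ 0) hx0) hs0) (pow_ne_zero 3 hxs)) (pow_ne_zero 3 hxs)) hLCD]; ring]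
  rw [show (1 * (x + s) ^ 2 * (4 * s * (s - x)) * (4 * s * (s - x))) / (2 * (x - s) ^ 2 * (x + s) ^ 3 * (x + s) ^ 3)
      = (8*s^2*x*(x-1)*(x-s^2)) / (x*(x-1)*(x-s^2)*(x+s)^4) from by
    rw [div_eq_div_iff (mul_ne_zero (mul_ne_zero (mul_ne_zero (by norm_num : (2:ℂ) ≠ 0) (pow_ne_zero 2 hxms)) (pow_ne_zero 3 hxs)) (pow_ne_zero 3 hxs)) hLCD]; ring]
  rw [show ((a + (a + 1 / 2) - b - 1 / 2 + 1) * ((x + s) ^ 2 * (1 + s) ^ 2) * (4 * s * (s - x)) * (4 * s * (s - x)))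
        / (4 * s * (x - 1) * (x - s ^ 2) * (x + s) ^ 3 * (x + s) ^ 3)
      = (4*(a+(a+1/2)-b-1/2+1)*s*(1+s)^2*(s-x)^2*x) / (x*(x-1)*(x-s^2)*(x+s)^4) from by
    rw [div_eq_div_iff (mul_ne_zero (mul_ne_zero (mul_ne_zero (mul_ne_zero (mul_ne_zero (by norm_num : (4:ℂ) ≠ 0) hs0) hx1) hxs2) (pow_ne_zero 3 hxs)) (pow_ne_zero 3 hxs)) hLCD]; ring]
  rw [show (8 * s * (x - 2 * s)) / (x + s) ^ 4
      = (8*s*(x-2*s)*x*(x-1)*(x-s^2)) / (x*(x-1)*(x-s^2)*(x+s)^4) from by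
    rw [div_eq_div_iff (pow_ne_zero 4 hxs) hLCD]; ring]
  rw [show (b * (4 * s * (s - x))) / (x * (x + s) ^ 3)
      = (4*b*s*(s-x)*(x-1)*(x-s^2)*(x+s)) / (x*(x-1)*(x-s^2)*(x+s)^4) from by
    rw [div_eq_div_iff (mul_ne_zero hx0 (pow_ne_zero 3 hxs)) hLCD]; ring]
  rw [show ((2 * a - b + 1) * (4 * s * (s - x))) / ((x - 1) * (x + s) ^ 3)
      = (4*s*(s-x)*(2*a-b+1)*x*(x-s^2)*(x+s)) / (x*(x-1)*(x-s^2)*(x+s)^4) from by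
    rw [div_eq_div_iff (mul_ne_zero hx1 (pow_ne_zero 3 hxs)) hLCD]; ring]
  rw [show ((2 * a - b + 1) * (4 * s * (s - x))) / ((x - s ^ 2) * (x + s) ^ 3)
      = (4*s*(s-x)*(2*a-b+1)*x*(x-1)*(x+s)) / (x*(x-1)*(x-s^2)*(x+s)^4) from by
    rw [div_eq_div_iff (mul_ne_zero hxs2 (pow_ne_zero 3 hxs)) hLCD]; ring]
  simp only [← neg_div]
  rw [← add_div, ← add_div, ← add_div, ← add_div, ← add_div,
    ← add_div, ← add_div, ← add_div, div_eq_zero_iff]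
  exact Or.inl (by ring)

private lemma aux_eC1 (x s a b : ℂ)
    (hx0 : x ≠ 0) (hx1 : x - 1 ≠ 0) (hxs2 : x - s^2 ≠ 0) (hxs : x + s ≠ 0)
    (hs0 : s ≠ 0) (h1s : (1:ℂ) + s ≠ 0) (hxms : x - s ≠ 0) :
    b / (4*x*s/(x+s)^2) + 1/2 / (4*x*s/(x+s)^2 - 1)
      + (a + (a + 1/2) - b - 1/2 + 1) / (4*x*s/(x+s)^2 - 4*s/(1+s)^2)
    = b*(x+s)^2/(4*x*s) - 1/2*(x+s)^2/(x-s)^2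
      - (a + (a + 1/2) - b - 1/2 + 1) * ((x+s)^2*(1+s)^2)/(4*s*(x-1)*(x-s^2)) := by
  have hd2 : 4*x*s/(x+s)^2 - 1 = -((x-s)^2/(x+s)^2) := by
    rw [div_sub_one (pow_ne_zero 2 hxs), show 4*x*s - (x+s)^2 = -(x-s)^2 from by ring, neg_div]
  have hd3 : 4*x*s/(x+s)^2 - 4*s/(1+s)^2
      = -(4*s*(x-1)*(x-s^2)/((x+s)^2*(1+s)^2)) := by
    rw [div_sub_div _ _ (pow_ne_zero 2 hxs) (pow_ne_zero 2 h1s),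
      show 4*x*s*(1+s)^2 - (x+s)^2*(4*s) = -(4*s*(x-1)*(x-s^2)) from by ring, neg_div]
  rw [hd2, hd3, div_neg, div_neg, div_div_eq_mul_div, div_div_eq_mul_div, div_div_eq_mul_div]
  ring

private lemma aux_eC0 (x s a q : ℂ)
    (hx0 : x ≠ 0) (hx1 : x - 1 ≠ 0) (hxs2 : x - s^2 ≠ 0) (hxs : x + s ≠ 0)
    (hs0 : s ≠ 0) (h1s : (1:ℂ) + s ≠ 0) (hxms : x - s ≠ 0) :
    (a * (a + 1/2) * (4*x*s/(x+s)^2) - q)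
        / ((4*x*s/(x+s)^2) * (4*x*s/(x+s)^2 - 1) * (4*x*s/(x+s)^2 - 4*s/(1+s)^2))
    = (a*(a+1/2)*(4*x*s) - q*(x+s)^2)/(x+s)^2 * ((x+s)^2*((x+s)^2*((x+s)^2*(1+s)^2)))
        / (16*x*s^2*(x-s)^2*(x-1)*(x-s^2)) := by
  have hd2 : 4*x*s/(x+s)^2 - 1 = -((x-s)^2/(x+s)^2) := by
    rw [div_sub_one (pow_ne_zero 2 hxs), show 4*x*s - (x+s)^2 = -(x-s)^2 from by ring, neg_div]
  have hd3 : 4*x*s/(x+s)^2 - 4*s/(1+s)^2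
      = -(4*s*(x-1)*(x-s^2)/((x+s)^2*(1+s)^2)) := by
    rw [div_sub_div _ _ (pow_ne_zero 2 hxs) (pow_ne_zero 2 h1s),
      show 4*x*s*(1+s)^2 - (x+s)^2*(4*s) = -(4*s*(x-1)*(x-s^2)) from by ring, neg_div]
  rw [hd2, hd3,
    show (4*x*s/(x+s)^2) * -((x-s)^2/(x+s)^2) * -(4*s*(x-1)*(x-s^2)/((x+s)^2*(1+s)^2))
      = (4*x*s/(x+s)^2) * ((x-s)^2/(x+s)^2) * (4*s*(x-1)*(x-s^2)/((x+s)^2*(1+s)^2)) from by ring,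
    show a * (a + 1/2) * (4*x*s/(x+s)^2) = a*(a+1/2)*(4*x*s)/(x+s)^2 from by ring,
    div_sub' (pow_ne_zero 2 hxs)]
  simp only [div_mul_div_comm, div_mul_eq_mul_div, mul_div_assoc', div_div_eq_mul_div,
    div_div, neg_mul, mul_neg, neg_div]
  rw [div_eq_div_iff
    (mul_ne_zero (pow_ne_zero 2 hxs) (mul_ne_zero (mul_ne_zero (mul_ne_zero (mul_ne_zero (by norm_num : (4:ℂ) ≠ 0) hx0) hs0) (pow_ne_zero 2 hxms)) (mul_ne_zero (mul_ne_zero (mul_ne_zero (by norm_num : (4:ℂ) ≠ 0) hs0) hx1) hxs2)))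
    (mul_ne_zero (pow_ne_zero 2 hxs) (mul_ne_zero (mul_ne_zero (mul_ne_zero (mul_ne_zero (mul_ne_zero (by norm_num : (16:ℂ) ≠ 0) hx0) (pow_ne_zero 2 hs0)) (pow_ne_zero 2 hxms)) hx1) hxs2))]
  ring

/-- `g` satisfies Heun's differential equation with parameters `(t, q; a, b; c; d)`
at the point `x`: `g` is twice complex differentiable at `x` and
`g''(x) + (c/x + d/(x-1) + (a+b-c-d+1)/(x-t)) g'(x) + ((a b x - q)/(x(x-1)(x-t))) g(x) = 0`. -/
def SatisfiesHeunAt (t q a b c d : ℂ) (g : ℂ → ℂ) (x : ℂ) : Prop :=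
  DifferentiableAt ℂ g x ∧ DifferentiableAt ℂ (deriv g) x ∧
    deriv (deriv g) x +
      (c / x + d / (x - 1) + (a + b - c - d + 1) / (x - t)) * deriv g x +
      ((a * b * x - q) / (x * (x - 1) * (x - t))) * g x = 0

theorem stmt7 (a b q s : ℂ) (hs0 : s ≠ 0) (hs1 : s ≠ 1) (hsm1 : s ≠ -1)
    (y : ℂ → ℂ) (V : Set ℂ) (hV : IsOpen V) (h0V : (0 : ℂ) ∈ V)
    (hya : AnalyticOnNhd ℂ y V)
    (hy : ∀ z ∈ V, z ≠ 0 → z ≠ 1 → z ≠ 4*s/(1+s)^2 →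
      SatisfiesHeunAt (4*s/(1+s)^2) q a (a + 1/2) b (1/2) y z) :
    ∃ U : Set ℂ, IsOpen U ∧ (0 : ℂ) ∈ U ∧ ∀ x ∈ U,
      x ≠ 0 → x ≠ 1 → x ≠ s^2 → x ≠ -s →
      SatisfiesHeunAt (s^2) ((1+s)^2*q - 2*a*b*s) (2*a) (2*a - b + 1) b (2*a - b + 1)
        (fun x : ℂ => (1 + x/s) ^ (-(2*a)) * y (4*x*s/(x+s)^2)) x := by
  have h1s : (1:ℂ) + s ≠ 0 := by
    intro h; apply hsm1; linear_combination h
  have hsnorm : 0 < ‖s‖ := by simpa using hs0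
  have hφc : ContinuousAt (fun w : ℂ => 4*w*s/(w+s)^2) 0 := by
    apply ContinuousAt.div (by fun_prop) (by fun_prop)
    simpa using pow_ne_zero 2 hs0
  have hnb : (fun w : ℂ => 4*w*s/(w+s)^2) ⁻¹' V ∈ nhds (0:ℂ) := by
    apply hφc.preimage_mem_nhds
    simpa using hV.mem_nhds h0V
  obtain ⟨ε, hε0, hεV⟩ := Metric.mem_nhds_iff.mp hnb
  set ρ := min ε (‖s‖/2) with hρdef
  have hρ0 : 0 < ρ := lt_min hε0 (by positivity)
  refine ⟨Metric.ball 0 ρ, Metric.isOpen_ball, Metric.mem_ball_self hρ0, ?_⟩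
  intro x hx hx0 hx1 hxs2 hxms
  have hfacts : ∀ w ∈ Metric.ball (0:ℂ) ρ,
      w + s ≠ 0 ∧ (1 + w/s) ∈ Complex.slitPlane ∧ 4*w*s/(w+s)^2 ∈ V := by
    intro w hw
    have hwn : ‖w‖ < ρ := by simpa [Metric.mem_ball] using hw
    have hw2 : ‖w‖ < ‖s‖/2 := lt_of_lt_of_le hwn (min_le_right _ _)
    have hws : w + s ≠ 0 := by
      intro h
      have : w = -s := by linear_combination h
      rw [this] at hw2
      simp only [norm_neg] at hw2
      linarith
    refine ⟨hws, ?_, ?_⟩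
    · rw [Complex.mem_slitPlane_iff]
      left
      have h1 : |(w/s).re| ≤ ‖w/s‖ := Complex.abs_re_le_norm _
      have h2 : ‖w/s‖ < 1/2 := by
        rw [norm_div]
        rw [div_lt_iff₀ hsnorm]
        linarith
      have h3 : (1 + w/s).re = 1 + (w/s).re := by simp
      rw [h3]
      have := abs_le.mp h1
      linarith
    · exact hεV (by simpa [Metric.mem_ball] using lt_of_lt_of_le hwn (min_le_left _ _))
  obtain ⟨hxs, hslitx, hzV⟩ := hfacts x hx
  have hxnes : x ≠ s := by
    intro h
    have hwn : ‖x‖ < ρ := by simpa [Metric.mem_ball] using hx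
    have hw2 : ‖x‖ < ‖s‖/2 := lt_of_lt_of_le hwn (min_le_right _ _)
    rw [h] at hw2; linarith
  have hx1' : x - 1 ≠ 0 := sub_ne_zero.mpr hx1
  have hxs2' : x - s^2 ≠ 0 := sub_ne_zero.mpr hxs2
  have hxms' : x - s ≠ 0 := sub_ne_zero.mpr hxnes
  have h1xs : 1 + x/s ≠ 0 := by
    intro h
    apply hxs
    have := congrArg (fun t : ℂ => t * s) h
    simp only [add_mul, one_mul, div_mul_cancel₀ _ hs0, zero_mul] at this
    linear_combination this
  -- facts about z = 4xs/(x+s)^2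
  have hz0 : 4*x*s/(x+s)^2 ≠ 0 :=
    div_ne_zero (mul_ne_zero (mul_ne_zero (by norm_num) hx0) hs0) (pow_ne_zero 2 hxs)
  have hz1 : 4*x*s/(x+s)^2 ≠ 1 := by
    intro h
    rw [div_eq_one_iff_eq (pow_ne_zero 2 hxs)] at h
    exact pow_ne_zero 2 hxms' (by linear_combination -h)
  have hzt : 4*x*s/(x+s)^2 ≠ 4*s/(1+s)^2 := by
    intro h
    rw [div_eq_div_iff (pow_ne_zero 2 hxs) (pow_ne_zero 2 h1s)] at h
    have h4 : (4:ℂ)*s*((x-1)*(x-s^2)) = 0 := by linear_combination -h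
    rcases mul_eq_zero.mp h4 with h' | h'
    · exact mul_ne_zero (by norm_num : (4:ℂ) ≠ 0) hs0 h'
    · rcases mul_eq_zero.mp h' with h'' | h''
      · exact hx1' h''
      · exact hxs2' h''
  obtain ⟨hdy, hdy2, heq⟩ := hy _ hzV hz0 hz1 hzt
  -- first derivative on the ball
  have hder : ∀ w ∈ Metric.ball (0:ℂ) ρ,
      HasDerivAt (fun x : ℂ => (1 + x/s) ^ (-(2*a)) * y (4*x*s/(x+s)^2))
      (-(2*a) * (1 + w/s) ^ (-(2*a) - 1) * (1/s) * y (4*w*s/(w+s)^2)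
        + (1 + w/s) ^ (-(2*a)) * (deriv y (4*w*s/(w+s)^2) * (4*s*(s-w)/(w+s)^3))) w := by
    intro w hw
    obtain ⟨hws, hslit, hwV⟩ := hfacts w hw
    have h1 : HasDerivAt (fun w:ℂ => 1 + w/s) (1/s) w := by
      simpa using ((hasDerivAt_id w).div_const s).const_add 1
    have hu : HasDerivAt (fun w:ℂ => (1 + w/s) ^ (-(2*a)))
        (-(2*a) * (1 + w/s) ^ (-(2*a) - 1) * (1/s)) w := h1.cpow_const hslit
    have hφ : HasDerivAt (fun w:ℂ => 4*w*s/(w+s)^2) (4*s*(s-w)/(w+s)^3) w := by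
      have hnum : HasDerivAt (fun w:ℂ => 4*w*s) (4*s) w := by
        simpa using ((hasDerivAt_id w).const_mul (4:ℂ)).mul_const s
      have hden : HasDerivAt (fun w:ℂ => (w+s)^2) (2*(w+s)) w := by
        simpa using ((hasDerivAt_id w).add_const s).fun_pow 2
      have := hnum.fun_div hden (pow_ne_zero 2 hws)
      convert this using 1
      iterate 2 rfl
      field_simp
      ring
    have hyz : HasDerivAt y (deriv y (4*w*s/(w+s)^2)) (4*w*s/(w+s)^2) :=
      (hya _ hwV).differentiableAt.hasDerivAt
    have hcomp : HasDerivAt (fun x : ℂ => y (4*x*s/(x+s)^2))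
        (deriv y (4*w*s/(w+s)^2) * (4*s*(s-w)/(w+s)^3)) w := by
      simpa [Function.comp_def] using HasDerivAt.comp w hyz hφ
    exact hu.mul hcomp
  have hevent : deriv (fun x : ℂ => (1 + x/s) ^ (-(2*a)) * y (4*x*s/(x+s)^2))
      =ᶠ[nhds x] (fun w : ℂ => -(2*a) * (1 + w/s) ^ (-(2*a) - 1) * (1/s) * y (4*w*s/(w+s)^2)
        + (1 + w/s) ^ (-(2*a)) * (deriv y (4*w*s/(w+s)^2) * (4*s*(s-w)/(w+s)^3))) := by
    filter_upwards [Metric.isOpen_ball.mem_nhds hx] with w hw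
    exact (hder w hw).deriv
  -- second derivative at x
  have h1 : HasDerivAt (fun w:ℂ => 1 + w/s) (1/s) x := by
    simpa using ((hasDerivAt_id x).div_const s).const_add 1
  have hφ : HasDerivAt (fun w:ℂ => 4*w*s/(w+s)^2) (4*s*(s-x)/(x+s)^3) x := by
    have hnum : HasDerivAt (fun w:ℂ => 4*w*s) (4*s) x := by
      simpa using ((hasDerivAt_id x).const_mul (4:ℂ)).mul_const s
    have hden : HasDerivAt (fun w:ℂ => (w+s)^2) (2*(x+s)) x := by
      simpa using ((hasDerivAt_id x).add_const s).fun_pow 2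
    have := hnum.fun_div hden (pow_ne_zero 2 hxs)
    convert this using 1
    iterate 2 rfl
    field_simp
    ring
  have hφ2 : HasDerivAt (fun w:ℂ => 4*s*(s-w)/(w+s)^3) (8*s*(x-2*s)/(x+s)^4) x := by
    have hnum : HasDerivAt (fun w:ℂ => 4*s*(s-w)) (-(4*s)) x := by
      simpa using ((hasDerivAt_id x).const_sub s).const_mul (4*s)
    have hden : HasDerivAt (fun w:ℂ => (w+s)^3) (3*(x+s)^2) x := by
      simpa using ((hasDerivAt_id x).add_const s).fun_pow 3
    have := hnum.fun_div hden (pow_ne_zero 3 hxs)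
    convert this using 1
    iterate 2 rfl
    field_simp
    ring
  have hyz : HasDerivAt y (deriv y (4*x*s/(x+s)^2)) (4*x*s/(x+s)^2) :=
    (hya _ hzV).differentiableAt.hasDerivAt
  have hyz2 : HasDerivAt (deriv y) (deriv (deriv y) (4*x*s/(x+s)^2)) (4*x*s/(x+s)^2) :=
    ((hya.deriv) _ hzV).differentiableAt.hasDerivAt
  have hA : HasDerivAt (fun w:ℂ => -(2*a) * (1 + w/s) ^ (-(2*a) - 1) * (1/s))
      (-(2*a) * ((-(2*a) - 1) * (1 + x/s) ^ (-(2*a) - 1 - 1) * (1/s)) * (1/s)) x :=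
    ((h1.cpow_const hslitx).const_mul (-(2*a))).mul_const (1/s)
  have hB : HasDerivAt (fun w:ℂ => (1 + w/s) ^ (-(2*a)))
      (-(2*a) * (1 + x/s) ^ (-(2*a) - 1) * (1/s)) x := h1.cpow_const hslitx
  have hcompy : HasDerivAt (fun x : ℂ => y (4*x*s/(x+s)^2))
      (deriv y (4*x*s/(x+s)^2) * (4*s*(s-x)/(x+s)^3)) x := by
    simpa [Function.comp_def] using HasDerivAt.comp x hyz hφ
  have hcompy' : HasDerivAt (fun x : ℂ => deriv y (4*x*s/(x+s)^2))
      (deriv (deriv y) (4*x*s/(x+s)^2) * (4*s*(s-x)/(x+s)^3)) x := by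
    simpa [Function.comp_def] using HasDerivAt.comp x hyz2 hφ
  have hD : HasDerivAt (fun w : ℂ => -(2*a) * (1 + w/s) ^ (-(2*a) - 1) * (1/s) * y (4*w*s/(w+s)^2)
        + (1 + w/s) ^ (-(2*a)) * (deriv y (4*w*s/(w+s)^2) * (4*s*(s-w)/(w+s)^3)))
      ((-(2*a) * ((-(2*a) - 1) * (1 + x/s) ^ (-(2*a) - 1 - 1) * (1/s)) * (1/s))
            * y (4*x*s/(x+s)^2)
        + -(2*a) * (1 + x/s) ^ (-(2*a) - 1) * (1/s)
            * (deriv y (4*x*s/(x+s)^2) * (4*s*(s-x)/(x+s)^3))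
        + (-(2*a) * (1 + x/s) ^ (-(2*a) - 1) * (1/s)
            * (deriv y (4*x*s/(x+s)^2) * (4*s*(s-x)/(x+s)^3))
          + (1 + x/s) ^ (-(2*a)) *
            (deriv (deriv y) (4*x*s/(x+s)^2) * (4*s*(s-x)/(x+s)^3) * (4*s*(s-x)/(x+s)^3)
              + deriv y (4*x*s/(x+s)^2) * (8*s*(x-2*s)/(x+s)^4)))) x :=
    (hA.mul hcompy).add (hB.mul (hcompy'.mul hφ2))
  refine ⟨(hder x hx).differentiableAt, hD.differentiableAt.congr_of_eventuallyEq hevent, ?_⟩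
  have hg2 : deriv (deriv (fun x : ℂ => (1 + x/s) ^ (-(2*a)) * y (4*x*s/(x+s)^2))) x
      = (-(2*a) * ((-(2*a) - 1) * (1 + x/s) ^ (-(2*a) - 1 - 1) * (1/s)) * (1/s))
            * y (4*x*s/(x+s)^2)
        + -(2*a) * (1 + x/s) ^ (-(2*a) - 1) * (1/s)
            * (deriv y (4*x*s/(x+s)^2) * (4*s*(s-x)/(x+s)^3))
        + (-(2*a) * (1 + x/s) ^ (-(2*a) - 1) * (1/s)
            * (deriv y (4*x*s/(x+s)^2) * (4*s*(s-x)/(x+s)^3))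
          + (1 + x/s) ^ (-(2*a)) *
            (deriv (deriv y) (4*x*s/(x+s)^2) * (4*s*(s-x)/(x+s)^3) * (4*s*(s-x)/(x+s)^3)
              + deriv y (4*x*s/(x+s)^2) * (8*s*(x-2*s)/(x+s)^4))) := by
    rw [hevent.deriv_eq]
    exact hD.deriv
  rw [hg2, (hder x hx).deriv]
  -- cpow power reductions
  have honeP : s/(x+s) * (1 + x/s) = 1 := by
    field_simp
    ring
  have e1 : (1 + x/s) ^ (-(2*a) - 1) = (1 + x/s) ^ (-(2*a)) * (s/(x+s)) := by
    rw [cpow_sub _ _ h1xs, cpow_one, div_eq_iff h1xs]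
    linear_combination (-(1 + x/s) ^ (-(2*a))) * honeP
  have e2 : (1 + x/s) ^ (-(2*a) - 1 - 1) = (1 + x/s) ^ (-(2*a)) * (s/(x+s)) * (s/(x+s)) := by
    rw [cpow_sub _ _ h1xs, cpow_one, e1, div_eq_iff h1xs]
    linear_combination (-((1 + x/s) ^ (-(2*a)) * (s/(x+s)))) * honeP
  rw [e2, e1]
  -- Heun relation at z, in cleaned form
  have eC1 := aux_eC1 x s a b hx0 hx1' hxs2' hxs hs0 h1s hxms'
  have eC0 := aux_eC0 x s a q hx0 hx1' hxs2' hxs hs0 h1s hxms'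
  have hY2 : deriv (deriv y) (4*x*s/(x+s)^2)
      = -((b*(x+s)^2/(4*x*s) - 1/2*(x+s)^2/(x-s)^2
            - (a + (a + 1/2) - b - 1/2 + 1) * ((x+s)^2*(1+s)^2)/(4*s*(x-1)*(x-s^2)))
              * deriv y (4*x*s/(x+s)^2)
          + ((a*(a+1/2)*(4*x*s) - q*(x+s)^2)/(x+s)^2 * ((x+s)^2*((x+s)^2*((x+s)^2*(1+s)^2)))
              / (16*x*s^2*(x-s)^2*(x-1)*(x-s^2))) * y (4*x*s/(x+s)^2)) := by
    linear_combination heq - (deriv y (4*x*s/(x+s)^2)) * eC1 - (y (4*x*s/(x+s)^2)) * eC0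
  rw [hY2]
  have hCY := aux_CY x s a b q hx0 hx1' hxs2' hxs hs0 h1s hxms'
  have hCY1 := aux_CY1 x s a b hx0 hx1' hxs2' hxs hs0 h1s hxms'
  beta_reduce
  linear_combination ((1 + x/s) ^ (-(2*a)) * y (4*x*s/(x+s)^2)) * hCY
    + ((1 + x/s) ^ (-(2*a)) * deriv y (4*x*s/(x+s)^2)) * hCY1
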